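/- arXiv:1202.3552 — 2 statements merged into one kernel-verified Lean document; each statement's English description precedes it below -/
import Mathlib

section
/- Let H be a connected bialgebra and A = A₋ ⊕ A₊ an algebra split as a direct sum of vector subspaces with projection R: A → A₋. Then every φ ∈ Hom(H,A) with φ(1) = 1 admits a unique Birkhoff decomposition φ = φ₋^{⋆−1} ⋆ φ₊ with φ±(ker ε) ⊆ A±, where on ker ε, φ₋(x) = −R[φ̄(x)] and φ₊(x) = (id − R)[φ̄(x)] for the Bogoliubov map φ̄(x) = φ(x) + Σ φ₋(x′)φ(x″). -/
open TensorProduct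

variable {K : Type*} [Field K]
variable {H : Type*} [Ring H] [Bialgebra K H]
variable {A : Type*} [Ring A] [Algebra K A]

/-- The convolution product on `Hom(H, A)`. -/
noncomputable def conv (f g : H →ₗ[K] A) : H →ₗ[K] A :=
  (LinearMap.mul' K A) ∘ₗ (TensorProduct.map f g) ∘ₗ (Coalgebra.comul (R := K))

/-- The convolution unit `e = u_A ∘ ε`. -/
noncomputable def convUnit : H →ₗ[K] A :=
  (Algebra.linearMap K A) ∘ₗ (Coalgebra.counit (R := K))

/-- The image `p ⊗ q` of a pair of submodules inside `H ⊗ H`. -/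
noncomputable def tensorSub (p q : Submodule K H) : Submodule K (H ⊗[K] H) :=
  LinearMap.range (TensorProduct.map p.subtype q.subtype)

section Aux

/-- reduced coproduct as a linear map -/
noncomputable def redComul : H →ₗ[K] H ⊗[K] H :=
  Coalgebra.comul - (TensorProduct.mk K H H 1) - ((TensorProduct.mk K H H).flip 1)

lemma redComul_apply (x : H) :
    redComul (K := K) x = Coalgebra.comul x - (1 : H) ⊗ₜ[K] x - x ⊗ₜ[K] (1 : H) := rfl

/-- projection onto `ker ε` along `K·1` -/
noncomputable def projKer : H →ₗ[K] H :=
  LinearMap.id - (Algebra.linearMap K H) ∘ₗ (Coalgebra.counit (R := K))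

lemma projKer_apply (x : H) :
    projKer (K := K) x = x - (Coalgebra.counit (R := K) x) • (1 : H) := by
  simp [projKer, Algebra.algebraMap_eq_smul_one]

lemma counit_projKer (x : H) : Coalgebra.counit (R := K) (projKer (K := K) x) = 0 := by
  rw [projKer_apply, map_sub, map_smul, Bialgebra.counit_one, smul_eq_mul, mul_one, sub_self]

lemma projKer_of_counit_eq_zero {x : H} (hx : Coalgebra.counit (R := K) x = 0) :
    projKer (K := K) x = x := by
  rw [projKer_apply, hx, zero_smul, sub_zero]

lemma projKer_one : projKer (K := K) (1 : H) = 0 := by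
  rw [projKer_apply, Bialgebra.counit_one, one_smul, sub_self]

lemma eq_counit_smul_add_projKer (x : H) :
    x = (Coalgebra.counit (R := K) x) • (1 : H) + projKer (K := K) x := by
  rw [projKer_apply]; abel

/-- extensionality: linear maps out of `H` agreeing on `1` and on `ker ε` are equal -/
lemma ext_one_ker {f g : H →ₗ[K] A} (h1 : f 1 = g 1)
    (hker : ∀ x : H, Coalgebra.counit (R := K) x = 0 → f x = g x) : f = g := by
  ext x
  have hx := eq_counit_smul_add_projKer (K := K) x
  calc f x = f ((Coalgebra.counit (R := K) x) • (1 : H) + projKer (K := K) x) := by rw [← hx]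
  _ = (Coalgebra.counit (R := K) x) • f 1 + f (projKer (K := K) x) := by
      rw [map_add, map_smul]
  _ = (Coalgebra.counit (R := K) x) • g 1 + g (projKer (K := K) x) := by
      rw [h1, hker _ (counit_projKer x)]
  _ = g x := by rw [← map_smul, ← map_add, ← hx]

lemma tmul_mem_tensorSub {p q : Submodule K H} {y z : H} (hy : y ∈ p) (hz : z ∈ q) :
    y ⊗ₜ[K] z ∈ tensorSub p q :=
  ⟨(⟨y, hy⟩ : p) ⊗ₜ[K] (⟨z, hz⟩ : q), rfl⟩

lemma tensorSub_induction {p q : Submodule K H} {w : H ⊗[K] H}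
    (hw : w ∈ tensorSub p q) {P : H ⊗[K] H → Prop}
    (h0 : P 0) (htmul : ∀ y ∈ p, ∀ z ∈ q, P (y ⊗ₜ[K] z))
    (hadd : ∀ a b, P a → P b → P (a + b)) : P w := by
  obtain ⟨t, rfl⟩ := hw
  induction t with
  | zero => simpa using h0
  | tmul y z => exact htmul y.1 y.2 z.1 z.2
  | add a b ha hb => rw [map_add]; exact hadd _ _ ha hb

lemma tensorSub_mono {p p' q q' : Submodule K H} (hp : p ≤ p') (hq : q ≤ q') :
    tensorSub p q ≤ tensorSub (K := K) p' q' := by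
  intro w hw
  refine tensorSub_induction hw (Submodule.zero_mem _) (fun y hy z hz => ?_)
    (fun a b ha hb => Submodule.add_mem _ ha hb)
  exact tmul_mem_tensorSub (hp hy) (hq hz)

end Aux

section B2

/-- `ε` applied to the left factor -/
noncomputable def epsL : H ⊗[K] H →ₗ[K] H :=
  (TensorProduct.lid K H).toLinearMap ∘ₗ (Coalgebra.counit (R := K)).rTensor H

noncomputable def epsR : H ⊗[K] H →ₗ[K] H :=
  (TensorProduct.rid K H).toLinearMap ∘ₗ (Coalgebra.counit (R := K)).lTensor H

lemma epsL_tmul (y z : H) : epsL (K := K) (y ⊗ₜ[K] z) = (Coalgebra.counit (R := K) y) • z := by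
  simp [epsL]

lemma epsR_tmul (y z : H) : epsR (K := K) (y ⊗ₜ[K] z) = (Coalgebra.counit (R := K) z) • y := by
  simp [epsR]

lemma epsL_comul (x : H) : epsL (K := K) (Coalgebra.comul x) = x := by
  have h := LinearMap.congr_fun (Coalgebra.rTensor_counit_comp_comul (R := K) (A := H)) x
  simp only [LinearMap.comp_apply] at h
  simp [epsL, h]

lemma epsR_comul (x : H) : epsR (K := K) (Coalgebra.comul x) = x := by
  have h := LinearMap.congr_fun (Coalgebra.lTensor_counit_comp_comul (R := K) (A := H)) x
  simp only [LinearMap.comp_apply] at h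
  simp [epsR, h]

end B2

section C2
variable {M : Type*} [AddCommMonoid M] [Module K M]


lemma sum_submodule_le {ι : Type*} (s : Finset ι) (P : ι → Submodule K M) (Q : Submodule K M)
    (h : ∀ i ∈ s, P i ≤ Q) : ∑ i ∈ s, P i ≤ Q := by
  classical
  induction s using Finset.induction_on with
  | empty => simp
  | @insert a s' hi ih =>
    rw [Finset.sum_insert hi]
    exact sup_le (h a (Finset.mem_insert_self a s'))
      (ih fun i hi' => h i (Finset.mem_insert_of_mem hi'))

lemma mem_tensorSub_span_left {q : Submodule K H} {u : H ⊗[K] H}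
    (hu : u ∈ tensorSub (Submodule.span K {(1 : H)}) q) :
    ∃ a ∈ q, u = (1 : H) ⊗ₜ[K] a := by
  refine tensorSub_induction (P := fun u => ∃ a ∈ q, u = (1 : H) ⊗ₜ[K] a) hu ⟨0, q.zero_mem, by simp⟩ (fun y hy z hz => ?_) ?_
  · obtain ⟨c, hc⟩ := Submodule.mem_span_singleton.mp hy
    exact ⟨c • z, q.smul_mem c hz, by rw [← hc, smul_tmul]⟩
  · rintro a b ⟨a', ha', rfl⟩ ⟨b', hb', rfl⟩
    exact ⟨a' + b', q.add_mem ha' hb', by rw [TensorProduct.tmul_add]⟩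

lemma mem_tensorSub_span_right {p : Submodule K H} {u : H ⊗[K] H}
    (hu : u ∈ tensorSub p (Submodule.span K {(1 : H)})) :
    ∃ b ∈ p, u = b ⊗ₜ[K] (1 : H) := by
  refine tensorSub_induction (P := fun u => ∃ b ∈ p, u = b ⊗ₜ[K] (1 : H)) hu ⟨0, p.zero_mem, by simp⟩ (fun y hy z hz => ?_) ?_
  · obtain ⟨c, hc⟩ := Submodule.mem_span_singleton.mp hz
    exact ⟨c • y, p.smul_mem c hy, by rw [← hc, ← smul_tmul]⟩
  · rintro a b ⟨a', ha', rfl⟩ ⟨b', hb', rfl⟩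
    exact ⟨a' + b', p.add_mem ha' hb', by rw [TensorProduct.add_tmul]⟩


end C2

section D

lemma epsL_mem {p q : Submodule K H} {w : H ⊗[K] H} (hw : w ∈ tensorSub p q) :
    epsL (K := K) w ∈ q := by
  refine tensorSub_induction (P := fun w => epsL (K := K) w ∈ q) hw (by simp) ?_ ?_
  · intro y _ z hz; rw [epsL_tmul]; exact q.smul_mem _ hz
  · intro a b ha hb; rw [map_add]; exact q.add_mem ha hb

lemma epsR_mem {p q : Submodule K H} {w : H ⊗[K] H} (hw : w ∈ tensorSub p q) :
    epsR (K := K) w ∈ p := by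
  refine tensorSub_induction (P := fun w => epsR (K := K) w ∈ p) hw (by simp) ?_ ?_
  · intro y hy z _; rw [epsR_tmul]; exact p.smul_mem _ hy
  · intro a b ha hb; rw [map_add]; exact p.add_mem ha hb

lemma redComul_mem (F : ℕ → Submodule K H) (hmono : Monotone F)
    (hcomul : ∀ n, ∀ x ∈ F n, Coalgebra.comul (R := K) x ∈
        ∑ i ∈ Finset.range (n + 1), tensorSub (F i) (F (n - i)))
    (hconn : F 0 = Submodule.span K {(1 : H)})
    {n : ℕ} {x : H} (hx : x ∈ F (n + 1)) :
    redComul (K := K) x ∈ tensorSub (F n) (F n) := by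
  have h1 : (1 : H) ∈ F 0 := hconn ▸ Submodule.mem_span_singleton_self 1
  have h1n : (1 : H) ∈ F n := hmono (Nat.zero_le n) h1
  have h := hcomul (n+1) x hx
  have hle : ∑ i ∈ Finset.range (n + 1 + 1), tensorSub (F i) (F (n + 1 - i)) ≤
      tensorSub (F 0) (F (n+1)) ⊔ (tensorSub (F (n+1)) (F 0) ⊔ tensorSub (F n) (F n)) := by
    refine sum_submodule_le _ _ _ (fun i hi => ?_)
    have hi' : i ≤ n + 1 := Nat.lt_succ_iff.mp (Finset.mem_range.mp hi)
    rcases Nat.eq_zero_or_pos i with h0 | hpos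
    · subst h0; exact le_sup_left
    rcases eq_or_lt_of_le hi' with htop | hlt
    · subst htop; rw [Nat.sub_self]; exact le_sup_of_le_right le_sup_left
    · have hin : i ≤ n := Nat.lt_succ_iff.mp hlt
      have hsub : n + 1 - i ≤ n := by omega
      exact le_sup_of_le_right (le_sup_of_le_right (tensorSub_mono (hmono hin) (hmono hsub)))
  obtain ⟨u, hu, vw, hvw, hsum⟩ := Submodule.mem_sup.mp (hle h)
  obtain ⟨v, hv, w, hw, rfl⟩ := Submodule.mem_sup.mp hvw
  rw [hconn] at hu hv
  obtain ⟨a, ha, rfl⟩ := mem_tensorSub_span_left hu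
  obtain ⟨b, hb, rfl⟩ := mem_tensorSub_span_right hv
  -- x in terms of a, b, w
  have hxL : x = a + (Coalgebra.counit (R := K) b) • (1 : H) + epsL (K := K) w := by
    have := congrArg (epsL (K := K)) hsum
    rw [epsL_comul] at this
    rw [← this, map_add, map_add, epsL_tmul, epsL_tmul, Bialgebra.counit_one, one_smul]; abel
  have hxR : x = (Coalgebra.counit (R := K) a) • (1 : H) + b + epsR (K := K) w := by
    have := congrArg (epsR (K := K)) hsum
    rw [epsR_comul] at this
    rw [← this, map_add, map_add, epsR_tmul, epsR_tmul, Bialgebra.counit_one, one_smul]; abel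
  have hEw : epsL (K := K) w ∈ F n := epsL_mem hw
  have hEw' : epsR (K := K) w ∈ F n := epsR_mem hw
  have ha' : a - x ∈ F n := by
    have heq : a - x = -((Coalgebra.counit (R := K) b) • (1 : H) + epsL (K := K) w) := by
      rw [hxL]; abel
    rw [heq]
    exact (F n).neg_mem ((F n).add_mem ((F n).smul_mem _ h1n) hEw)
  have hb' : b - x ∈ F n := by
    have heq : b - x = -((Coalgebra.counit (R := K) a) • (1 : H) + epsR (K := K) w) := by
      rw [hxR]; abel
    rw [heq]
    exact (F n).neg_mem ((F n).add_mem ((F n).smul_mem _ h1n) hEw')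
  have hred : redComul (K := K) x =
      (1 : H) ⊗ₜ[K] (a - x) + ((b - x) ⊗ₜ[K] (1 : H) + w) := by
    rw [redComul_apply, ← hsum, TensorProduct.tmul_sub, TensorProduct.sub_tmul]; abel
  rw [hred]
  exact (tensorSub (F n) (F n)).add_mem (tmul_mem_tensorSub h1n ha')
    ((tensorSub (F n) (F n)).add_mem (tmul_mem_tensorSub hb' h1n) hw)

end D

section E

lemma mul'_map_congr_left {p q' : Submodule K H} {f g : H →ₗ[K] A}
    (h : ∀ y ∈ p, f y = g y) (q : H →ₗ[K] A) {w : H ⊗[K] H} (hw : w ∈ tensorSub p q') :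
    (LinearMap.mul' K A) ((TensorProduct.map f q) w)
      = (LinearMap.mul' K A) ((TensorProduct.map g q) w) := by
  refine tensorSub_induction (P := fun w => (LinearMap.mul' K A) ((TensorProduct.map f q) w)
      = (LinearMap.mul' K A) ((TensorProduct.map g q) w)) hw (by simp) ?_ ?_
  · intro y hy z _
    simp only [TensorProduct.map_tmul, LinearMap.mul'_apply, h y hy]
  · intro a b ha hb
    simp only [map_add, ha, hb]

/-- the recursion operator -/
noncomputable def Sop (q : H →ₗ[K] A) (T : A →ₗ[K] A) (f : H →ₗ[K] A) : H →ₗ[K] A :=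
  T ∘ₗ (LinearMap.mul' K A) ∘ₗ (TensorProduct.map f q) ∘ₗ redComul ∘ₗ projKer

lemma Sop_apply (q : H →ₗ[K] A) (T : A →ₗ[K] A) (f : H →ₗ[K] A) (x : H) :
    Sop q T f x = T ((LinearMap.mul' K A)
      ((TensorProduct.map f q) (redComul (K := K) (projKer (K := K) x)))) := rfl

variable (F : ℕ → Submodule K H) (hmono : Monotone F)
  (hcomul : ∀ n, ∀ x ∈ F n, Coalgebra.comul (R := K) x ∈
      ∑ i ∈ Finset.range (n + 1), tensorSub (F i) (F (n - i)))
  (hconn : F 0 = Submodule.span K {(1 : H)})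
  (hcover : ∀ x : H, ∃ n, x ∈ F n)

include hmono hconn in

lemma one_mem_F (n : ℕ) : (1 : H) ∈ F n :=
  hmono (Nat.zero_le n) (hconn ▸ Submodule.mem_span_singleton_self 1)

include hmono hconn in
lemma projKer_mem {n : ℕ} {x : H} (hx : x ∈ F n) : projKer (K := K) x ∈ F n := by
  rw [projKer_apply]
  exact (F n).sub_mem hx ((F n).smul_mem _ (one_mem_F F hmono hconn n))

include hmono hcomul hconn in
lemma Sop_congr {n : ℕ} (q : H →ₗ[K] A) (T : A →ₗ[K] A) {f g : H →ₗ[K] A}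
    (h : ∀ y ∈ F n, f y = g y) {x : H} (hx : x ∈ F (n + 1)) :
    Sop q T f x = Sop q T g x := by
  have hred := redComul_mem F hmono hcomul hconn (projKer_mem F hmono hconn hx)
  rw [Sop_apply, Sop_apply, mul'_map_congr_left h q hred]

include hconn in
lemma Sop_zero_on_F0 (q : H →ₗ[K] A) (T : A →ₗ[K] A) (f : H →ₗ[K] A)
    {x : H} (hx : x ∈ F 0) : Sop q T f x = 0 := by
  rw [hconn] at hx
  obtain ⟨c, rfl⟩ := Submodule.mem_span_singleton.mp hx
  have h0 : projKer (K := K) ((c : K) • (1 : H)) = 0 := by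
    rw [map_smul, projKer_one, smul_zero]
  rw [Sop_apply, h0]
  simp

/-- partial sums of the fixed-point iteration -/
noncomputable def Pn (q : H →ₗ[K] A) (T : A →ₗ[K] A) (c : H →ₗ[K] A) : ℕ → (H →ₗ[K] A)
  | 0 => c
  | n + 1 => c + Sop q T (Pn q T c n)

include hmono hcomul hconn in
lemma Pn_stable (q : H →ₗ[K] A) (T : A →ₗ[K] A) (c : H →ₗ[K] A) :
    ∀ n m, n ≤ m → ∀ x ∈ F n, Pn q T c m x = Pn q T c n x := by
  intro n
  induction n with
  | zero =>
    intro m _ x hx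
    induction m with
    | zero => rfl
    | succ m _ =>
      show (c + Sop q T (Pn q T c m)) x = c x
      rw [LinearMap.add_apply, Sop_zero_on_F0 F hconn q T _ hx, add_zero]
  | succ n ihn =>
    intro m hm x hx
    obtain ⟨m', rfl⟩ : ∃ m', m = m' + 1 := ⟨m - 1, by omega⟩
    show (c + Sop q T (Pn q T c m')) x = (c + Sop q T (Pn q T c n)) x
    rw [LinearMap.add_apply, LinearMap.add_apply,
      Sop_congr F hmono hcomul hconn q T (fun y hy => ihn m' (by omega) y hy) hx]

open Classical in
/-- the glued fixed point map -/
noncomputable def fixMap (hmono : Monotone F)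
    (hcomul : ∀ n, ∀ x ∈ F n, Coalgebra.comul (R := K) x ∈
        ∑ i ∈ Finset.range (n + 1), tensorSub (F i) (F (n - i)))
    (hconn : F 0 = Submodule.span K {(1 : H)})
    (hcover : ∀ x : H, ∃ n, x ∈ F n)
    (q : H →ₗ[K] A) (T : A →ₗ[K] A) (c : H →ₗ[K] A) : H →ₗ[K] A where
  toFun x := Pn q T c (Classical.choose (hcover x)) x
  map_add' x y := by
    set nx := Classical.choose (hcover x) with hnx
    set ny := Classical.choose (hcover y) with hny
    set nxy := Classical.choose (hcover (x + y)) with hnxy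
    have hx : x ∈ F nx := Classical.choose_spec (hcover x)
    have hy : y ∈ F ny := Classical.choose_spec (hcover y)
    have hxy : x + y ∈ F nxy := Classical.choose_spec (hcover (x + y))
    set M := max (max nx ny) nxy with hM
    have hxM : x ∈ F M := hmono (by omega) hx
    have hyM : y ∈ F M := hmono (by omega) hy
    calc Pn q T c nxy (x + y)
        = Pn q T c M (x + y) := (Pn_stable F hmono hcomul hconn q T c nxy M (by omega) _ hxy).symm
      _ = Pn q T c M x + Pn q T c M y := map_add _ _ _
      _ = Pn q T c nx x + Pn q T c ny y := by
          rw [Pn_stable F hmono hcomul hconn q T c nx M (by omega) _ hx,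
            Pn_stable F hmono hcomul hconn q T c ny M (by omega) _ hy]
  map_smul' k x := by
    set nx := Classical.choose (hcover x) with hnx
    set nkx := Classical.choose (hcover (k • x)) with hnkx
    have hx : x ∈ F nx := Classical.choose_spec (hcover x)
    have hkx : k • x ∈ F nkx := Classical.choose_spec (hcover (k • x))
    set M := max nx nkx with hM
    calc Pn q T c nkx (k • x)
        = Pn q T c M (k • x) := (Pn_stable F hmono hcomul hconn q T c nkx M (by omega) _ hkx).symm
      _ = k • Pn q T c M x := map_smul _ _ _
      _ = k • Pn q T c nx x := by
          rw [Pn_stable F hmono hcomul hconn q T c nx M (by omega) _ hx]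

include hmono hcomul hconn hcover in
lemma fixMap_eq (q : H →ₗ[K] A) (T : A →ₗ[K] A) (c : H →ₗ[K] A)
    {n : ℕ} {x : H} (hx : x ∈ F n) :
    fixMap F hmono hcomul hconn hcover q T c x = Pn q T c n x := by
  have hN : x ∈ F (Classical.choose (hcover x)) := Classical.choose_spec (hcover x)
  set N := Classical.choose (hcover x) with hNdef
  show Pn q T c N x = Pn q T c n x
  calc Pn q T c N x = Pn q T c (max N n) x :=
        (Pn_stable F hmono hcomul hconn q T c N (max N n) (le_max_left _ _) _ hN).symm
    _ = Pn q T c n x := Pn_stable F hmono hcomul hconn q T c n (max N n) (le_max_right _ _) _ hx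

include hmono hcomul hconn hcover in
lemma fixMap_fixed (q : H →ₗ[K] A) (T : A →ₗ[K] A) (c : H →ₗ[K] A) :
    fixMap F hmono hcomul hconn hcover q T c
      = c + Sop q T (fixMap F hmono hcomul hconn hcover q T c) := by
  ext x
  obtain ⟨n, hn⟩ := hcover x
  have hx' : x ∈ F (n + 1) := hmono (Nat.le_succ n) hn
  rw [fixMap_eq F hmono hcomul hconn hcover q T c hx']
  show (c + Sop q T (Pn q T c n)) x = _
  rw [LinearMap.add_apply, LinearMap.add_apply,
    Sop_congr F hmono hcomul hconn q T
      (fun y hy => (fixMap_eq F hmono hcomul hconn hcover q T c hy).symm) hx']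

end E

section Fc

lemma convUnit_apply (x : H) :
    convUnit (K := K) (A := A) x = algebraMap K A (Coalgebra.counit (R := K) x) := rfl

lemma convUnit_one : convUnit (K := K) (A := A) (H := H) 1 = 1 := by
  rw [convUnit_apply, Bialgebra.counit_one, map_one]

lemma convUnit_ker {x : H} (hx : Coalgebra.counit (R := K) x = 0) :
    convUnit (K := K) (A := A) x = 0 := by
  rw [convUnit_apply, hx, map_zero]

lemma conv_apply (f g : H →ₗ[K] A) (x : H) :
    conv f g x = (LinearMap.mul' K A)
      ((TensorProduct.map f g) (Coalgebra.comul (R := K) x)) := rfl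

lemma conv_one (f g : H →ₗ[K] A) : conv f g 1 = f 1 * g 1 := by
  rw [conv_apply, Bialgebra.comul_one, Algebra.TensorProduct.one_def,
    TensorProduct.map_tmul, LinearMap.mul'_apply]

lemma conv_apply' (f g : H →ₗ[K] A) (x : H) :
    conv f g x = f 1 * g x + f x * g 1
      + (LinearMap.mul' K A) ((TensorProduct.map f g) (redComul (K := K) x)) := by
  have hc : Coalgebra.comul (R := K) x
      = redComul (K := K) x + (1 : H) ⊗ₜ[K] x + x ⊗ₜ[K] (1 : H) := by
    rw [redComul_apply]; abel
  rw [conv_apply, hc, map_add, map_add, map_add, map_add,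
    TensorProduct.map_tmul, TensorProduct.map_tmul, LinearMap.mul'_apply, LinearMap.mul'_apply]
  abel

lemma conv_unit_left (f : H →ₗ[K] A) : conv convUnit f = f := by
  ext x
  have key : TensorProduct.map (convUnit (K := K) (A := A)) f
      = TensorProduct.map (Algebra.linearMap K A) f ∘ₗ
        (Coalgebra.counit (R := K) (A := H)).rTensor H := by
    have h := TensorProduct.map_comp (Algebra.linearMap K A) f
      (Coalgebra.counit (R := K) (A := H)) (LinearMap.id : H →ₗ[K] H)
    rw [LinearMap.comp_id] at h
    exact h
  have hax := LinearMap.congr_fun (Coalgebra.rTensor_counit_comp_comul (R := K) (A := H)) x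
  simp only [LinearMap.comp_apply] at hax
  rw [conv_apply, key, LinearMap.comp_apply, hax]
  simp [LinearMap.mul'_apply]

lemma conv_unit_right (f : H →ₗ[K] A) : conv f convUnit = f := by
  ext x
  have key : TensorProduct.map f (convUnit (K := K) (A := A))
      = TensorProduct.map f (Algebra.linearMap K A) ∘ₗ
        (Coalgebra.counit (R := K) (A := H)).lTensor H := by
    have h := TensorProduct.map_comp f (Algebra.linearMap K A) (LinearMap.id : H →ₗ[K] H)
      (Coalgebra.counit (R := K) (A := H))
    rw [LinearMap.comp_id] at h
    exact h
  have hax := LinearMap.congr_fun (Coalgebra.lTensor_counit_comp_comul (R := K) (A := H)) x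
  simp only [LinearMap.comp_apply] at hax
  rw [conv_apply, key, LinearMap.comp_apply, hax]
  simp [LinearMap.mul'_apply]

lemma conv_assoc (f g h : H →ₗ[K] A) : conv (conv f g) h = conv f (conv g h) := by
  have claim3 : (LinearMap.mul' K A) ∘ₗ (LinearMap.mul' K A).lTensor A ∘ₗ
      (TensorProduct.map f (TensorProduct.map g h)) ∘ₗ
        (TensorProduct.assoc K H H H).toLinearMap
      = (LinearMap.mul' K A) ∘ₗ (LinearMap.mul' K A).rTensor A ∘ₗ
        (TensorProduct.map (TensorProduct.map f g) h) := by
    apply TensorProduct.ext_threefold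
    intro x y z
    simp [LinearMap.mul'_apply, mul_assoc]
  ext x
  have h1 : ∀ u : H ⊗[K] H, (LinearMap.mul' K A) ((TensorProduct.map (conv f g) h) u)
      = (LinearMap.mul' K A) (((LinearMap.mul' K A).rTensor A)
          ((TensorProduct.map (TensorProduct.map f g) h)
            (((Coalgebra.comul (R := K)).rTensor H) u))) := by
    intro u
    induction u with
    | zero => simp
    | tmul y z =>
      simp [conv_apply, LinearMap.rTensor_tmul, TensorProduct.map_tmul, LinearMap.mul'_apply]
    | add a b ha hb => simp only [map_add, ha, hb]
  have h2 : ∀ u : H ⊗[K] H, (LinearMap.mul' K A) ((TensorProduct.map f (conv g h)) u)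
      = (LinearMap.mul' K A) (((LinearMap.mul' K A).lTensor A)
          ((TensorProduct.map f (TensorProduct.map g h))
            (((Coalgebra.comul (R := K)).lTensor H) u))) := by
    intro u
    induction u with
    | zero => simp
    | tmul y z =>
      simp [conv_apply, LinearMap.lTensor_tmul, TensorProduct.map_tmul, LinearMap.mul'_apply]
    | add a b ha hb => simp only [map_add, ha, hb]
  have hco : ((Coalgebra.comul (R := K)).lTensor H) (Coalgebra.comul (R := K) x)
      = (TensorProduct.assoc K H H H)
          (((Coalgebra.comul (R := K)).rTensor H) (Coalgebra.comul (R := K) x)) := by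
    have := LinearMap.congr_fun (Coalgebra.coassoc (R := K) (A := H)) x
    simp only [LinearMap.comp_apply] at this
    exact this.symm
  rw [conv_apply, conv_apply, h1, h2, hco]
  exact (LinearMap.congr_fun claim3
    (((Coalgebra.comul (R := K)).rTensor H) (Coalgebra.comul (R := K) x))).symm

end Fc


/-- `(φm, φp)` is a Birkhoff decomposition of `φ` w.r.t. the splitting
`A = Am ⊕ Ap`: both send `1` to `1`, `φm (ker ε) ⊆ Am`, `φp (ker ε) ⊆ Ap`, and
`φ = φm^{⋆-1} ⋆ φp`. -/
noncomputable def IsBirkhoff (Am Ap : Submodule K A)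
    (φ φm φp : H →ₗ[K] A) : Prop :=
  φm 1 = 1 ∧ φp 1 = 1 ∧
  (∀ x : H, Coalgebra.counit (R := K) x = 0 → φm x ∈ Am) ∧
  (∀ x : H, Coalgebra.counit (R := K) x = 0 → φp x ∈ Ap) ∧
  ∃ ψ : H →ₗ[K] A, conv φm ψ = convUnit ∧ conv ψ φm = convUnit ∧ conv ψ φp = φ

/-- The Bogoliubov map `φ̄ x = φ x + m ∘ (φm ⊗ φ) (Δ̃ x)`, with
`Δ̃ x = Δ x - 1 ⊗ x - x ⊗ 1` the reduced coproduct. -/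
noncomputable def bogoliubov (φ φm : H →ₗ[K] A) (x : H) : A :=
  φ x + (LinearMap.mul' K A)
    ((TensorProduct.map φm φ)
      (Coalgebra.comul (R := K) x - (1 : H) ⊗ₜ[K] x - x ⊗ₜ[K] (1 : H)))

section G

lemma bogoliubov_apply (φ φm : H →ₗ[K] A) (x : H) :
    bogoliubov φ φm x = φ x + (LinearMap.mul' K A)
      ((TensorProduct.map φm φ) (redComul (K := K) x)) := rfl

lemma conv_eq_add_bogoliubov {φ f : H →ₗ[K] A} (hf : f 1 = 1) (hφ : φ 1 = 1) (x : H) :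
    conv f φ x = f x + bogoliubov φ f x := by
  rw [conv_apply', hf, hφ, one_mul, mul_one, bogoliubov_apply]
  abel

variable (F : ℕ → Submodule K H) (hmono : Monotone F)
  (hcomul : ∀ n, ∀ x ∈ F n, Coalgebra.comul (R := K) x ∈
      ∑ i ∈ Finset.range (n + 1), tensorSub (F i) (F (n - i)))
  (hconn : F 0 = Submodule.span K {(1 : H)})
  (hcover : ∀ x : H, ∃ n, x ∈ F n)

include hmono hcomul hconn hcover in
lemma fixMap_one (q : H →ₗ[K] A) (T : A →ₗ[K] A) (c : H →ₗ[K] A) :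
    fixMap F hmono hcomul hconn hcover q T c 1 = c 1 := by
  have h := LinearMap.congr_fun (fixMap_fixed F hmono hcomul hconn hcover q T c) 1
  rw [LinearMap.add_apply, Sop_apply, projKer_one, map_zero, map_zero, map_zero, map_zero,
    add_zero] at h
  exact h

include hmono hcomul hconn hcover in
lemma fixMap_ker (q : H →ₗ[K] A) (T : A →ₗ[K] A) (c : H →ₗ[K] A)
    {x : H} (hx : Coalgebra.counit (R := K) x = 0) :
    fixMap F hmono hcomul hconn hcover q T c x
      = c x + T ((LinearMap.mul' K A) ((TensorProduct.map
          (fixMap F hmono hcomul hconn hcover q T c) q) (redComul (K := K) x))) := by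
  have h := LinearMap.congr_fun (fixMap_fixed F hmono hcomul hconn hcover q T c) x
  rw [LinearMap.add_apply, Sop_apply, projKer_of_counit_eq_zero hx] at h
  exact h

include hmono hcomul hconn hcover in
lemma fixInv_spec (g : H →ₗ[K] A) (hg : g 1 = 1) :
    fixMap F hmono hcomul hconn hcover g (-LinearMap.id) (convUnit - g ∘ₗ projKer) 1 = 1 ∧
    conv (fixMap F hmono hcomul hconn hcover g (-LinearMap.id) (convUnit - g ∘ₗ projKer)) g
      = convUnit := by
  set L := fixMap F hmono hcomul hconn hcover g (-LinearMap.id) (convUnit - g ∘ₗ projKer)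
    with hL
  have h1 : L 1 = 1 := by
    rw [hL, fixMap_one F hmono hcomul hconn hcover, LinearMap.sub_apply, convUnit_one,
      LinearMap.comp_apply, projKer_one, map_zero, sub_zero]
  refine ⟨h1, ?_⟩
  apply ext_one_ker
  · rw [conv_one, h1, hg, one_mul, convUnit_one]
  · intro x hx
    have hk := fixMap_ker F hmono hcomul hconn hcover g (-LinearMap.id)
      (convUnit - g ∘ₗ projKer) hx
    rw [conv_apply', h1, hg, one_mul, mul_one, convUnit_ker hx]
    rw [← hL] at hk
    rw [hk, LinearMap.sub_apply, convUnit_ker hx, LinearMap.comp_apply,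
      projKer_of_counit_eq_zero hx, LinearMap.neg_apply, LinearMap.id_apply]
    abel

end G

/-- in a connected bialgebra `H`, every `φ` with `φ 1 = 1` admits a
unique Birkhoff decomposition w.r.t. a vector-space splitting `A = Am ⊕ Ap` with
projection `R` onto `Am`; on `ker ε` it is given by `φm x = -R (φ̄ x)` and
`φp x = (id - R) (φ̄ x)`. -/
theorem birkhoff_decomposition
    (F : ℕ → Submodule K H)
    (hmono : Monotone F)
    (hcover : ∀ x : H, ∃ n, x ∈ F n)
    (hcomul : ∀ n, ∀ x ∈ F n,
      Coalgebra.comul (R := K) x ∈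
        ∑ i ∈ Finset.range (n + 1), tensorSub (F i) (F (n - i)))
    (hconn : F 0 = Submodule.span K {(1 : H)})
    (Am Ap : Submodule K A) (hAc : IsCompl Am Ap)
    (R : A →ₗ[K] A) (hR₁ : ∀ a ∈ Am, R a = a) (hR₂ : ∀ a ∈ Ap, R a = 0)
    (φ : H →ₗ[K] A) (hφ : φ 1 = 1) :
    (∃! p : (H →ₗ[K] A) × (H →ₗ[K] A), IsBirkhoff Am Ap φ p.1 p.2) ∧
    (∀ φm φp : H →ₗ[K] A, IsBirkhoff Am Ap φ φm φp →
      ∀ x : H, Coalgebra.counit (R := K) x = 0 →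
        φm x = -R (bogoliubov φ φm x) ∧
        φp x = bogoliubov φ φm x - R (bogoliubov φ φm x)) := by
  classical
  -- any Birkhoff `φp` equals `φm ⋆ φ`
  have convEq : ∀ φm φp : H →ₗ[K] A, IsBirkhoff Am Ap φ φm φp → φp = conv φm φ := by
    rintro φm φp ⟨h1, h2, h3, h4, ψ, hψ1, hψ2, hψ3⟩
    calc φp = conv convUnit φp := (conv_unit_left _).symm
      _ = conv (conv φm ψ) φp := by rw [hψ1]
      _ = conv φm (conv ψ φp) := conv_assoc _ _ _
      _ = conv φm φ := by rw [hψ3]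
  -- part 2
  have key : ∀ φm φp : H →ₗ[K] A, IsBirkhoff Am Ap φ φm φp →
      ∀ x : H, Coalgebra.counit (R := K) x = 0 →
        φm x = -R (bogoliubov φ φm x) ∧
        φp x = bogoliubov φ φm x - R (bogoliubov φ φm x) := by
    intro φm φp hB x hx
    obtain ⟨h1, h2, h3, h4, -⟩ := id hB
    have hφp := convEq φm φp hB
    have e1 : φp x = φm x + bogoliubov φ φm x := by
      rw [hφp]; exact conv_eq_add_bogoliubov h1 hφ x
    have hRp : R (φp x) = 0 := hR₂ _ (h4 x hx)
    have hRm : R (φm x) = φm x := hR₁ _ (h3 x hx)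
    have e2 : φm x + R (bogoliubov φ φm x) = 0 := by
      have h := congrArg R e1
      rw [map_add, hRm, hRp] at h
      exact h.symm
    have e3 : φm x = -R (bogoliubov φ φm x) := eq_neg_of_add_eq_zero_left e2
    refine ⟨e3, ?_⟩
    rw [e1, e3]
    abel
  -- range facts about R
  have hRam : ∀ a : A, R a ∈ Am := by
    intro a
    obtain ⟨a₁, ha₁, a₂, ha₂, rfl⟩ := Submodule.mem_sup.mp
      (hAc.sup_eq_top ▸ Submodule.mem_top (x := a))
    rw [map_add, hR₁ a₁ ha₁, hR₂ a₂ ha₂, add_zero]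
    exact ha₁
  have hRap : ∀ a : A, a - R a ∈ Ap := by
    intro a
    obtain ⟨a₁, ha₁, a₂, ha₂, rfl⟩ := Submodule.mem_sup.mp
      (hAc.sup_eq_top ▸ Submodule.mem_top (x := a))
    rw [map_add, hR₁ a₁ ha₁, hR₂ a₂ ha₂, add_zero, add_sub_cancel_left]
    exact ha₂
  -- construction of φm
  set c₁ : H →ₗ[K] A := convUnit - R ∘ₗ φ ∘ₗ projKer with hc₁
  set Φm : H →ₗ[K] A := fixMap F hmono hcomul hconn hcover φ (-R) c₁ with hΦmdef
  have hΦm1 : Φm 1 = 1 := by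
    rw [hΦmdef, fixMap_one F hmono hcomul hconn hcover, hc₁, LinearMap.sub_apply,
      convUnit_one, LinearMap.comp_apply, LinearMap.comp_apply, projKer_one, map_zero,
      map_zero, sub_zero]
  have hΦmker : ∀ x : H, Coalgebra.counit (R := K) x = 0 →
      Φm x = -R (bogoliubov φ Φm x) := by
    intro x hx
    have hk := fixMap_ker F hmono hcomul hconn hcover φ (-R) c₁ hx
    rw [← hΦmdef] at hk
    rw [hk, hc₁, LinearMap.sub_apply, convUnit_ker hx, LinearMap.comp_apply,
      LinearMap.comp_apply, projKer_of_counit_eq_zero hx, LinearMap.neg_apply,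
      bogoliubov_apply, map_add]
    abel
  set Φp : H →ₗ[K] A := conv Φm φ with hΦpdef
  have hΦp1 : Φp 1 = 1 := by rw [hΦpdef, conv_one, hΦm1, hφ, one_mul]
  have hΦpx : ∀ x : H, Φp x = Φm x + bogoliubov φ Φm x := by
    intro x; rw [hΦpdef]; exact conv_eq_add_bogoliubov hΦm1 hφ x
  have h3' : ∀ x : H, Coalgebra.counit (R := K) x = 0 → Φm x ∈ Am := by
    intro x hx
    rw [hΦmker x hx]
    exact Am.neg_mem (hRam _)
  have h4' : ∀ x : H, Coalgebra.counit (R := K) x = 0 → Φp x ∈ Ap := by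
    intro x hx
    have : Φp x = bogoliubov φ Φm x - R (bogoliubov φ Φm x) := by
      rw [hΦpx x, hΦmker x hx]; abel
    rw [this]
    exact hRap _
  -- the convolution inverse
  set ψ : H →ₗ[K] A := fixMap F hmono hcomul hconn hcover Φm (-LinearMap.id)
    (convUnit - Φm ∘ₗ projKer) with hψdef
  obtain ⟨hψ1, hψconv⟩ := fixInv_spec F hmono hcomul hconn hcover Φm hΦm1
  rw [← hψdef] at hψ1 hψconv
  set ψ₂ : H →ₗ[K] A := fixMap F hmono hcomul hconn hcover ψ (-LinearMap.id)
    (convUnit - ψ ∘ₗ projKer) with hψ₂def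
  obtain ⟨hψ₂1, hψ₂conv⟩ := fixInv_spec F hmono hcomul hconn hcover ψ hψ1
  rw [← hψ₂def] at hψ₂1 hψ₂conv
  have hψ₂eq : ψ₂ = Φm := by
    calc ψ₂ = conv ψ₂ convUnit := (conv_unit_right _).symm
      _ = conv ψ₂ (conv ψ Φm) := by rw [hψconv]
      _ = conv (conv ψ₂ ψ) Φm := (conv_assoc _ _ _).symm
      _ = conv convUnit Φm := by rw [hψ₂conv]
      _ = Φm := conv_unit_left _
  have hconvΦmψ : conv Φm ψ = convUnit := by rw [← hψ₂eq]; exact hψ₂conv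
  have hψΦp : conv ψ Φp = φ := by
    rw [hΦpdef, ← conv_assoc, hψconv, conv_unit_left]
  have hB : IsBirkhoff Am Ap φ Φm Φp :=
    ⟨hΦm1, hΦp1, h3', h4', ψ, hconvΦmψ, hψconv, hψΦp⟩
  refine ⟨⟨(Φm, Φp), hB, ?_⟩, key⟩
  rintro ⟨φm', φp'⟩ hB'
  have hker' := key φm' φp' hB'
  have hkerΦ := key Φm Φp hB
  have hagree : ∀ n, ∀ x ∈ F n, φm' x = Φm x := by
    intro n
    induction n with
    | zero =>
      intro x hx
      rw [hconn] at hx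
      obtain ⟨k, rfl⟩ := Submodule.mem_span_singleton.mp hx
      rw [map_smul, map_smul, hB'.1, hB.1]
    | succ n ih =>
      intro x hx
      have hd := eq_counit_smul_add_projKer (K := K) x
      have hpx : projKer (K := K) x ∈ F (n + 1) := projKer_mem F hmono hconn hx
      have hεp : Coalgebra.counit (R := K) (projKer (K := K) x) = 0 := counit_projKer x
      have h₁ := (hker' (projKer (K := K) x) hεp).1
      have h₂ := (hkerΦ (projKer (K := K) x) hεp).1
      have hred := redComul_mem F hmono hcomul hconn hpx
      have hmm := mul'_map_congr_left (q := φ) ih hred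
      have hpeq : φm' (projKer (K := K) x) = Φm (projKer (K := K) x) := by
        rw [h₁, h₂, bogoliubov_apply, bogoliubov_apply, hmm]
      calc φm' x
          = (Coalgebra.counit (R := K) x) • φm' 1 + φm' (projKer (K := K) x) := by
            conv_lhs => rw [hd]
            rw [map_add, map_smul]
        _ = (Coalgebra.counit (R := K) x) • Φm 1 + Φm (projKer (K := K) x) := by
            rw [hB'.1, hB.1, hpeq]
        _ = Φm x := by
            rw [← map_smul, ← map_add, ← hd]
  have hφm : φm' = Φm := by
    ext x
    obtain ⟨n, hn⟩ := hcover x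
    exact hagree n x hn
  have hφp : φp' = Φp := by
    rw [convEq φm' φp' hB', hφm, hΦpdef]
  exact Prod.ext hφm hφp
end

section
/- The operator ∫₀ of antidifferentiation (x^n ↦ x^{n+1}/(n+1)) is a Hochschild 1-cocycle on the polynomial Hopf algebra K[x]: Δ ∘ ∫₀ = (id ⊗ ∫₀) ∘ Δ + ∫₀ ⊗ 1. Moreover, every Hochschild 1-cocycle on K[x] is uniquely a sum λ·∫₀ + ∂α for a scalar λ and a functional α, so the first Hochschild cohomology HH¹_ε(K[x]) is one-dimensional. -/
open TensorProduct Polynomial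

variable (K : Type) [Field K] [CharZero K]

/-- The Hochschild coboundary `∂α = (id ⊗ α) ∘ Δ - α(·)·1` of a functional `α`
on the polynomial Hopf algebra. -/
noncomputable def coboundary (D : K[X] →ₐ[K] (K[X] ⊗[K] K[X]))
    (α : K[X] →ₗ[K] K) : K[X] →ₗ[K] K[X] :=
  (TensorProduct.rid K K[X]).toLinearMap ∘ₗ
      (TensorProduct.map LinearMap.id α) ∘ₗ D.toLinearMap -
    (LinearMap.toSpanSingleton K K[X] 1) ∘ₗ α

open Finset

omit [CharZero K] in
lemma ext_Xpow {M : Type*} [AddCommMonoid M] [Module K M] {f g : K[X] →ₗ[K] M}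
    (h : ∀ n, f (X ^ n) = g (X ^ n)) : f = g := by
  apply Polynomial.lhom_ext'
  intro n; ext
  simpa [X_pow_eq_monomial] using h n

omit [CharZero K] in
lemma Dpow (D : K[X] →ₐ[K] (K[X] ⊗[K] K[X]))
    (hD : D X = X ⊗ₜ[K] (1 : K[X]) + (1 : K[X]) ⊗ₜ[K] X) (n : ℕ) :
    D (X ^ n) = ∑ k ∈ range (n+1),
      (n.choose k : K) • ((X ^ k) ⊗ₜ[K] (X ^ (n-k)) : K[X] ⊗[K] K[X]) := by
  rw [map_pow, hD, add_pow]
  refine Finset.sum_congr rfl fun k hk => ?_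
  rw [Algebra.TensorProduct.tmul_pow, Algebra.TensorProduct.tmul_pow,
    one_pow, one_pow, Algebra.TensorProduct.tmul_mul_tmul, one_mul, mul_one,
    mul_comm, Nat.cast_smul_eq_nsmul, nsmul_eq_mul]

/-- the functional `a ⊗ b ↦ f a * g b` -/
noncomputable def phi2 (f g : K[X] →ₗ[K] K) : (K[X] ⊗[K] K[X]) →ₗ[K] K :=
  (TensorProduct.lid K K).toLinearMap ∘ₗ TensorProduct.map f g

omit [CharZero K] in
lemma phi2_tmul (f g : K[X] →ₗ[K] K) (a b : K[X]) :
    phi2 K f g (a ⊗ₜ[K] b) = f a * g b := by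
  simp [phi2, smul_eq_mul]

omit [CharZero K] in
lemma phi2_D (D : K[X] →ₐ[K] (K[X] ⊗[K] K[X]))
    (hD : D X = X ⊗ₜ[K] (1 : K[X]) + (1 : K[X]) ⊗ₜ[K] X)
    (j : ℕ) (g : K[X] →ₗ[K] K) (n : ℕ) :
    phi2 K (lcoeff K j) g (D (X ^ n)) =
      if j ≤ n then (n.choose j : K) * g (X ^ (n - j)) else 0 := by
  rw [Dpow K D hD, map_sum]
  have : ∀ k ∈ range (n+1),
      phi2 K (lcoeff K j) g ((n.choose k : K) • ((X ^ k) ⊗ₜ[K] (X ^ (n-k)) : K[X] ⊗[K] K[X]))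
        = if k = j then (n.choose k : K) * g (X ^ (n - k)) else 0 := by
    intro k hk
    rw [map_smul, phi2_tmul, lcoeff_apply, coeff_X_pow, smul_eq_mul]
    by_cases h : j = k
    · simp [h]
    · simp [h, Ne.symm h]
  rw [Finset.sum_congr rfl this, Finset.sum_ite_eq' (range (n+1)) j
    (fun k => (n.choose k : K) * g (X ^ (n - k)))]
  simp [Nat.lt_succ_iff]

omit [CharZero K] in
lemma phi2_D_coeff (D : K[X] →ₐ[K] (K[X] ⊗[K] K[X]))
    (hD : D X = X ⊗ₜ[K] (1 : K[X]) + (1 : K[X]) ⊗ₜ[K] X)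
    (i j : ℕ) (q : K[X]) :
    phi2 K (lcoeff K j) (lcoeff K i) (D q) = ((i+j).choose j : K) * q.coeff (i + j) := by
  have := ext_Xpow K (f := (phi2 K (lcoeff K j) (lcoeff K i)) ∘ₗ D.toLinearMap)
    (g := ((i+j).choose j : K) • lcoeff K (i+j)) ?_
  · exact congrFun (congrArg DFunLike.coe this) q
  intro n
  simp only [LinearMap.comp_apply, AlgHom.toLinearMap_apply, LinearMap.smul_apply,
    smul_eq_mul]
  rw [phi2_D K D hD]
  rcases eq_or_ne n (i + j) with h | h
  · subst h
    rw [if_pos (by omega)]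
    have h2 : i + j - j = i := by omega
    rw [h2]
    simp [lcoeff_apply, coeff_X_pow]
  · simp only [lcoeff_apply, coeff_X_pow]
    rw [if_neg (by omega : ¬ i + j = n), mul_zero]
    by_cases hj : j ≤ n
    · rw [if_pos hj, if_neg (by omega), mul_zero]
    · rw [if_neg hj]

omit [CharZero K] in
lemma phi2_map (f g : K[X] →ₗ[K] K) (L : K[X] →ₗ[K] K[X]) (t : K[X] ⊗[K] K[X]) :
    phi2 K f g ((TensorProduct.map LinearMap.id L) t) = phi2 K f (g ∘ₗ L) t := by
  have : (phi2 K f g) ∘ₗ (TensorProduct.map LinearMap.id L) = phi2 K f (g ∘ₗ L) := by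
    apply TensorProduct.ext'
    intro a b
    simp [phi2_tmul]
  exact congrFun (congrArg DFunLike.coe this) t

omit [CharZero K] in
lemma key_id (D : K[X] →ₐ[K] (K[X] ⊗[K] K[X]))
    (hD : D X = X ⊗ₜ[K] (1 : K[X]) + (1 : K[X]) ⊗ₜ[K] X)
    (L : K[X] →ₗ[K] K[X])
    (hL : ∀ p : K[X], D (L p) =
      (TensorProduct.map LinearMap.id L) (D p) + L p ⊗ₜ[K] (1 : K[X]))
    (n i j : ℕ) :
    ((i+j).choose j : K) * (L (X^n)).coeff (i+j) =
      (if j ≤ n then (n.choose j : K) * (L (X^(n-j))).coeff i else 0)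
      + (if i = 0 then (L (X^n)).coeff j else 0) := by
  have h := congrArg (phi2 K (lcoeff K j) (lcoeff K i)) (hL (X^n))
  rw [map_add, phi2_D_coeff K D hD, phi2_map, phi2_tmul,
    phi2_D K D hD j ((lcoeff K i) ∘ₗ L) n] at h
  simp only [lcoeff_apply, LinearMap.comp_apply, coeff_one] at h
  rw [h]
  congr 1
  rcases eq_or_ne i 0 with hi | hi <;> simp [hi]

omit [CharZero K] in
lemma cob_apply (D : K[X] →ₐ[K] (K[X] ⊗[K] K[X]))
    (hD : D X = X ⊗ₜ[K] (1 : K[X]) + (1 : K[X]) ⊗ₜ[K] X)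
    (β : K[X] →ₗ[K] K) (n : ℕ) :
    coboundary K D β (X^n) =
      (∑ k ∈ range (n+1), ((n.choose k : K) * β (X^(n-k))) • X^k) - β (X^n) • 1 := by
  simp only [coboundary, LinearMap.sub_apply, LinearMap.comp_apply,
    AlgHom.toLinearMap_apply, LinearMap.toSpanSingleton_apply]
  congr 1
  rw [Dpow K D hD, map_sum, map_sum]
  refine Finset.sum_congr rfl fun k hk => ?_
  rw [map_smul, map_smul, TensorProduct.map_tmul, LinearMap.id_apply]
  simp [TensorProduct.rid_tmul, smul_smul]

omit [CharZero K] in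
lemma cob_coeff (D : K[X] →ₐ[K] (K[X] ⊗[K] K[X]))
    (hD : D X = X ⊗ₜ[K] (1 : K[X]) + (1 : K[X]) ⊗ₜ[K] X)
    (β : K[X] →ₗ[K] K) (n m : ℕ) :
    (coboundary K D β (X^n)).coeff m =
      (if m ≤ n then (n.choose m : K) * β (X^(n-m)) else 0)
      - (if m = 0 then β (X^n) else 0) := by
  rw [cob_apply K D hD, coeff_sub, finset_sum_coeff]
  congr 1
  · have : ∀ k ∈ range (n+1),
        (((n.choose k : K) * β (X^(n-k))) • X^k).coeff m
          = if k = m then (n.choose k : K) * β (X^(n-k)) else 0 := by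
      intro k hk
      rw [coeff_smul, coeff_X_pow, smul_eq_mul]
      by_cases h : m = k
      · simp [h]
      · simp [h, Ne.symm h]
    rw [Finset.sum_congr rfl this, Finset.sum_ite_eq' (range (n+1)) m
      (fun k => (n.choose k : K) * β (X^(n-k)))]
    simp [Nat.lt_succ_iff]
  · rw [coeff_smul, coeff_one, smul_eq_mul]
    rcases eq_or_ne m 0 with h | h <;> simp [h]

omit [CharZero K] in
lemma coeff0 (D : K[X] →ₐ[K] (K[X] ⊗[K] K[X]))
    (hD : D X = X ⊗ₜ[K] (1 : K[X]) + (1 : K[X]) ⊗ₜ[K] X)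
    (L : K[X] →ₗ[K] K[X])
    (hL : ∀ p : K[X], D (L p) =
      (TensorProduct.map LinearMap.id L) (D p) + L p ⊗ₜ[K] (1 : K[X]))
    (n : ℕ) : (L (X^n)).coeff 0 = 0 := by
  have h := key_id K D hD L hL n 0 0
  simp at h
  exact h

lemma coeff_succ (D : K[X] →ₐ[K] (K[X] ⊗[K] K[X]))
    (hD : D X = X ⊗ₜ[K] (1 : K[X]) + (1 : K[X]) ⊗ₜ[K] X)
    (L : K[X] →ₗ[K] K[X])
    (hL : ∀ p : K[X], D (L p) =
      (TensorProduct.map LinearMap.id L) (D p) + L p ⊗ₜ[K] (1 : K[X]))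
    (n j : ℕ) : (L (X^n)).coeff (j+1) =
      if j ≤ n then (n.choose j : K) * (L (X^(n-j))).coeff 1 / ((j:K)+1) else 0 := by
  have h := key_id K D hD L hL n 1 j
  have hc : ((1+j).choose j : K) = (j:K)+1 := by
    rw [add_comm 1 j, Nat.choose_succ_self_right]; push_cast; ring
  rw [hc, if_neg one_ne_zero, add_zero, add_comm 1 j] at h
  have hj : ((j:K)+1) ≠ 0 := Nat.cast_add_one_ne_zero j
  by_cases hle : j ≤ n
  · rw [if_pos hle] at h ⊢
    rw [eq_div_iff hj, mul_comm]
    exact h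
  · rw [if_neg hle] at h ⊢
    exact (mul_eq_zero.mp h).resolve_left hj

/-- on the polynomial Hopf algebra `K[x]` (with `x` primitive, so
the coproduct is the algebra morphism `D` with `D x = x ⊗ 1 + 1 ⊗ x`), the
antidifferentiation operator `∫₀ : xⁿ ↦ xⁿ⁺¹/(n+1)` is a Hochschild 1-cocycle,
and every Hochschild 1-cocycle `L` is uniquely of the form `λ·∫₀ + ∂α`; hence
`HH¹_ε(K[x])` is one-dimensional. -/
theorem polynomial_cocycles
    (D : K[X] →ₐ[K] (K[X] ⊗[K] K[X]))
    (hD : D X = X ⊗ₜ[K] (1 : K[X]) + (1 : K[X]) ⊗ₜ[K] X)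
    (I : K[X] →ₗ[K] K[X])
    (hI : ∀ n : ℕ, I (X ^ n) = C (((n : K) + 1)⁻¹) * X ^ (n + 1)) :
    -- `∫₀` is a Hochschild 1-cocycle
    (∀ p : K[X], D (I p) =
      (TensorProduct.map LinearMap.id I) (D p) + I p ⊗ₜ[K] (1 : K[X])) ∧
    -- every 1-cocycle is uniquely `λ·∫₀ + ∂α`
    (∀ L : K[X] →ₗ[K] K[X],
      (∀ p : K[X], D (L p) =
        (TensorProduct.map LinearMap.id L) (D p) + L p ⊗ₜ[K] (1 : K[X])) →
      ∃! c : K × (K[X] →ₗ[K] K), L = c.1 • I + coboundary K D c.2) := by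
  constructor
  · -- Part 1 : I is a cocycle
    have hmaps : D.toLinearMap ∘ₗ I =
        (TensorProduct.map LinearMap.id I) ∘ₗ D.toLinearMap +
          ((TensorProduct.mk K K[X] K[X]).flip 1) ∘ₗ I := by
      apply ext_Xpow K
      intro n
      simp only [LinearMap.comp_apply, LinearMap.add_apply, AlgHom.toLinearMap_apply,
        LinearMap.flip_apply, TensorProduct.mk_apply]
      rw [hI n, ← smul_eq_C_mul, map_smul, Dpow K D hD (n+1), Finset.sum_range_succ,
        smul_add, Dpow K D hD n, map_sum, Finset.smul_sum]
      congr 1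
      · refine Finset.sum_congr rfl fun k hk => ?_
        rw [mem_range, Nat.lt_succ_iff] at hk
        rw [map_smul, TensorProduct.map_tmul, LinearMap.id_apply, hI (n-k),
          ← smul_eq_C_mul, tmul_smul, smul_smul, smul_smul]
        have hidx : n - k + 1 = n + 1 - k := by omega
        rw [hidx]
        congr 1
        have hnat : (n+1) * n.choose k = (n+1).choose k * (n+1-k) := by
          rw [Nat.add_one_mul_choose_eq, Nat.choose_succ_right_eq]
        have h2 : ((n-k:ℕ):K)+1 = ((n+1-k:ℕ):K) := by
          have h3 : n+1-k = (n-k)+1 := by omega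
          rw [h3]; push_cast; ring
        have hK : ((n:K)+1) * (n.choose k : K) = ((n+1).choose k : K) * (((n-k:ℕ):K)+1) := by
          rw [h2]; exact_mod_cast hnat
        have hne1 : ((n:K)+1) ≠ 0 := Nat.cast_add_one_ne_zero n
        have hne2 : (((n-k:ℕ):K)+1) ≠ 0 := Nat.cast_add_one_ne_zero (n-k)
        rw [inv_mul_eq_div, ← div_eq_mul_inv, div_eq_div_iff hne1 hne2]
        linear_combination -hK
      · rw [Nat.choose_self, Nat.cast_one, one_smul, Nat.sub_self, pow_zero]
        exact TensorProduct.smul_tmul' _ _ _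
    intro p
    have := congrFun (congrArg DFunLike.coe hmaps) p
    simpa using this
  · -- Part 2
    intro L hL
    set c : ℕ → K := fun m => (L (X^(m+1))).coeff 1 / ((m:K)+1) with hc
    set lam : K := (L (X^(0:ℕ))).coeff 1 with hlam
    set α : K[X] →ₗ[K] K :=
      Polynomial.lsum (fun m => LinearMap.toSpanSingleton K K (c m)) with hadef
    have hα : ∀ m : ℕ, α (X^m) = c m := by
      intro m
      rw [hadef, X_pow_eq_monomial]
      simp [Polynomial.lsum_apply, Polynomial.sum_monomial_index,
        LinearMap.toSpanSingleton_apply]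
    have hIc : ∀ n m : ℕ, (I (X^n)).coeff m
        = ((n:K)+1)⁻¹ * (if m = n+1 then 1 else 0) := by
      intro n m
      rw [hI n, coeff_C_mul, coeff_X_pow]
    have hex : L = lam • I + coboundary K D α := by
      apply ext_Xpow K
      intro n
      simp only [LinearMap.add_apply, LinearMap.smul_apply]
      apply Polynomial.ext
      intro m
      rw [coeff_add, coeff_smul, smul_eq_mul, hIc n m, cob_coeff K D hD α n m]
      rcases m with _ | j
      · rw [coeff0 K D hD L hL n]
        rw [if_neg (by omega : ¬ (0:ℕ) = n+1), mul_zero, mul_zero, zero_add,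
          if_pos (Nat.zero_le n), if_pos rfl, Nat.sub_zero, Nat.choose_zero_right]
        simp [hα]
      · rw [coeff_succ K D hD L hL n j, if_neg (by omega : ¬ j+1 = 0), sub_zero]
        rcases lt_trichotomy j n with hjn | hjn | hjn
        · rw [if_neg (by omega : ¬ j+1 = n+1), mul_zero, mul_zero, zero_add,
            if_pos hjn.le, if_pos (by omega : j+1 ≤ n), hα]
          simp only [hc]
          have h1 : n - (j+1) + 1 = n - j := by omega
          rw [h1]
          have hne1 : ((j:K)+1) ≠ 0 := Nat.cast_add_one_ne_zero j
          have hnat : n.choose (j+1) * (j+1) = n.choose j * (n-j) :=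
            Nat.choose_succ_right_eq n j
          have hcast : ((n-(j+1):ℕ):K)+1 = ((n-j:ℕ):K) := by
            have h3 : n - j = (n-(j+1))+1 := by omega
            rw [h3]; push_cast; ring
          have hKid : (n.choose (j+1) : K) * ((j:K)+1)
              = (n.choose j : K) * ((n-j:ℕ):K) := by
            exact_mod_cast hnat
          have hne2' : ((n-j:ℕ):K) ≠ 0 := by
            rw [← hcast]; exact Nat.cast_add_one_ne_zero _
          rw [hcast, ← mul_div_assoc, div_eq_div_iff hne1 hne2']
          linear_combination -(L (X^(n-j))).coeff 1 * hKid
        · subst hjn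
          rw [if_pos rfl, mul_one, if_pos le_rfl, Nat.sub_self, Nat.choose_self,
            Nat.cast_one, one_mul, if_neg (by omega : ¬ j+1 ≤ j), add_zero,
            ← hlam, div_eq_mul_inv, mul_comm]
        · rw [if_neg (by omega : ¬ j+1 = n+1), mul_zero, mul_zero, zero_add,
            if_neg (by omega : ¬ j ≤ n), if_neg (by omega : ¬ j+1 ≤ n)]
    refine ⟨(lam, α), hex, ?_⟩
    rintro ⟨lam', α'⟩ hL'
    have hval : ∀ n m : ℕ, (L (X^n)).coeff m = lam' * (I (X^n)).coeff m
        + ((if m ≤ n then (n.choose m : K) * α' (X^(n-m)) else 0)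
          - (if m = 0 then α' (X^n) else 0)) := by
      intro n m
      rw [hL']
      simp only [LinearMap.add_apply, LinearMap.smul_apply, coeff_add, coeff_smul,
        smul_eq_mul, cob_coeff K D hD α' n m]
    have hlam' : lam' = lam := by
      have h := hval 0 1
      rw [hIc 0 1] at h
      simp at h
      rw [hlam, pow_zero]
      exact h.symm
    have hα' : α' = α := by
      apply ext_Xpow K
      intro m
      have h := hval (m+1) 1
      rw [hIc (m+1) 1, if_neg (by omega : ¬ (1:ℕ) = m+1+1), mul_zero, mul_zero,
        zero_add, if_pos (by omega : 1 ≤ m+1), if_neg one_ne_zero, sub_zero,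
        Nat.choose_one_right, Nat.add_sub_cancel] at h
      have hne : ((m:K)+1) ≠ 0 := Nat.cast_add_one_ne_zero m
      rw [hα m]
      simp only [hc]
      rw [h]
      push_cast
      field_simp
    rw [Prod.ext_iff]
    exact ⟨hlam', hα'⟩
end
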